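/- arXiv:0712.1377 — 5 statements merged into one kernel-verified Lean document; each statement's English description precedes it below -/
import Mathlib

section
/- Let S̃ be an n×n symmetric matrix with S̃² = D²·C for a permutation-involution matrix C and suppose a field automorphism σ of ℂ satisfies σ(S̃) = S̃·B·P where P is a permutation matrix and B is diagonal with entries ε_j/d, ε_j = ±1, d ≠ 0. Then for all j,k: s̃_{j,k} = ε_{σ(j)}·ε_k·s̃_{σ(j),σ^{-1}(k)}, where σ also denotes the permutation given by P. -/
theorem stmt3 (n : ℕ) (S : Matrix (Fin n) (Fin n) ℂ) (D : ℝ) (hD : 0 < D)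
    (c : Equiv.Perm (Fin n)) (hc : c * c = 1)
    (hsym : S.IsSymm)
    (hSS : S * S = ((D^2 : ℝ) : ℂ) • Matrix.of (fun i j => if i = c j then (1 : ℂ) else 0))
    (σ : ℂ ≃+* ℂ) (τ : Equiv.Perm (Fin n)) (ε : Fin n → ℂ)
    (hε : ∀ j, ε j = 1 ∨ ε j = -1) (d : ℂ) (hd : d ≠ 0)
    (hσS : S.map ⇑σ = S * Matrix.diagonal (fun j => ε j / d) *
      Matrix.of (fun i j => if i = τ j then (1 : ℂ) else 0)) :
    ∀ j k, S j k = ε (τ j) * ε k * S (τ j) (τ⁻¹ k) := by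
  have hS : ∀ j k, S j k = S k j := fun j k => by
    conv_lhs => rw [← hsym]
    rfl
  have hentry : ∀ j k, (S * Matrix.diagonal (fun j => ε j / d) *
      Matrix.of (fun i j => if i = τ j then (1 : ℂ) else 0)) j k
      = S j (τ k) * (ε (τ k) / d) := by
    intro j k
    rw [Matrix.mul_apply]
    rw [Finset.sum_eq_single (τ k)]
    · simp [Matrix.mul_apply, Matrix.diagonal, Finset.sum_eq_single (τ k)]
    · intro b _ hb
      simp [Matrix.of_apply, hb]
    · simp
  have hmapsym : ∀ j k, (S.map ⇑σ) j k = (S.map ⇑σ) k j := fun j k => by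
    simp [Matrix.map_apply, hS j k]
  have key : ∀ j k, S j (τ k) * (ε (τ k) / d) = S (τ j) k * (ε (τ j) / d) := by
    intro j k
    have := hmapsym j k
    rw [hσS, hentry, hentry] at this
    rw [this, hS k (τ j)]
  intro j k
  have h := key j (τ⁻¹ k)
  simp only [Equiv.Perm.coe_inv, Equiv.apply_symm_apply] at h
  have hd' : S j k * ε k = S (τ j) (τ⁻¹ k) * ε (τ j) := by
    field_simp at h
    linear_combination h
  have hεk : ε k * ε k = 1 := by rcases hε k with h1 | h1 <;> simp [h1]
  calc S j k = S j k * ε k * ε k := by rw [mul_assoc, hεk, mul_one]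
    _ = ε (τ j) * ε k * S (τ j) (τ⁻¹ k) := by rw [hd']; ring
end

section
/- Let S̃ be an n×n real symmetric invertible matrix with S̃² = D²·I, D > 0, and let σ be a field automorphism with σ(S̃) = (1/d)·S̃·E·P for a diagonal sign matrix E = diag(ε_0,…,ε_{n-1}) and permutation matrix P, where d = s̃_{σ(0),0} > 0. If n is even then ∏_{j} ε_j = sign(P). -/
theorem stmt4 (n : ℕ) [NeZero n] (hn : Even n) (S : Matrix (Fin n) (Fin n) ℂ)
    (hreal : ∀ i j, ∃ r : ℝ, S i j = (r : ℂ))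
    (hsym : S.IsSymm) (hinv : IsUnit S.det)
    (D : ℝ) (hD : 0 < D) (hSS : S * S = ((D^2 : ℝ) : ℂ) • 1)
    (σ : ℂ ≃+* ℂ) (τ : Equiv.Perm (Fin n)) (ε : Fin n → ℂ)
    (hε : ∀ j, ε j = 1 ∨ ε j = -1)
    (d : ℝ) (hd : 0 < d) (hdS : S (τ 0) 0 = ((d : ℝ) : ℂ))
    (hσS : S.map ⇑σ = (1 / (d : ℂ)) •
      (S * Matrix.diagonal ε * Matrix.of (fun i j => if i = τ j then (1 : ℂ) else 0))) :
    ∏ j, ε j = ((Equiv.Perm.sign τ : ℤ) : ℂ) := by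
  classical
  have hd0 : (d : ℂ) ≠ 0 := by
    exact_mod_cast (Complex.ofReal_ne_zero.mpr hd.ne')
  have hdetS : S.det ≠ 0 := hinv.ne_zero
  set X : ℂ := ((D ^ 2 : ℝ) : ℂ) with hX
  -- entrywise formula for σ(S i j)
  have hentry : ∀ i j, σ (S i j) = (1 / (d : ℂ)) * (S i (τ j) * ε (τ j)) := by
    intro i j
    have h1 := congrFun (congrFun hσS i) j
    have h2 : (S * Matrix.diagonal ε *
        Matrix.of (fun i j => if i = τ j then (1 : ℂ) else 0)) i j
        = S i (τ j) * ε (τ j) := by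
      rw [Matrix.mul_apply, Finset.sum_eq_single (τ j)]
      · simp [Matrix.mul_diagonal]
      · intro k _ hk
        simp [Matrix.of_apply, hk]
      · simp
    simpa [Matrix.map_apply, Matrix.smul_apply, h2] using h1
  have hε2 : ∀ j, ε j * ε j = 1 := by
    intro j; rcases hε j with h | h <;> simp [h]
  -- (S * S) diagonal entries
  have hSSaa : ∀ i : Fin n, (∑ k, S i k * S k i) = X := by
    intro i
    have h := congrFun (congrFun hSS i) i
    simpa [Matrix.mul_apply, Matrix.smul_apply, Matrix.one_apply] using h
  -- key : σ X = X / d^2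
  have hkey : σ X = X / (d : ℂ) ^ 2 := by
    have h0 : σ X = ∑ k, σ (S 0 k) * σ (S k 0) := by
      rw [← hSSaa 0, map_sum]
      simp [map_mul]
    have h1 : ∀ k, σ (S 0 k) * σ (S k 0)
        = (1 / (d : ℂ)) ^ 2 * (S k (τ 0) * S k (τ 0)) := by
      intro k
      have hs : S 0 k = S k 0 := (hsym.apply k 0)
      rw [hs, hentry k 0]
      linear_combination ((1 / (d : ℂ)) ^ 2 * (S k (τ 0) * S k (τ 0))) * hε2 (τ 0)
    have h2 : (∑ k, S k (τ 0) * S k (τ 0)) = X := by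
      rw [← hSSaa (τ 0)]
      refine Finset.sum_congr rfl fun k _ => ?_
      rw [hsym.apply (τ 0) k]
    calc σ X = ∑ k, (1 / (d : ℂ)) ^ 2 * (S k (τ 0) * S k (τ 0)) := by
          rw [h0]; exact Finset.sum_congr rfl fun k _ => h1 k
      _ = (1 / (d : ℂ)) ^ 2 * ∑ k, S k (τ 0) * S k (τ 0) := by
          rw [Finset.mul_sum]
      _ = X / (d : ℂ) ^ 2 := by rw [h2]; field_simp
  -- det S = ± X^(n/2)
  obtain ⟨m, hm⟩ := hn
  have hnm : n = 2 * m := by omega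
  have hdet2 : S.det * S.det = (X ^ m) * (X ^ m) := by
    have h := congrArg Matrix.det hSS
    rw [Matrix.det_mul, Matrix.det_smul, Matrix.det_one, mul_one] at h
    rw [h, Fintype.card_fin, hm, pow_add]
  have hdetpm : S.det = X ^ m ∨ S.det = -(X ^ m) := mul_self_eq_mul_self_iff.mp hdet2
  -- σ (det S) = det S / d ^ n
  have hsdet : σ S.det = S.det / (d : ℂ) ^ n := by
    have hXm : σ (X ^ m) = X ^ m / (d : ℂ) ^ n := by
      rw [map_pow, hkey, div_pow, ← pow_mul, hnm, mul_comm 2 m]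
    rcases hdetpm with h | h <;> rw [h] <;>
      simp [hXm, map_neg, neg_div]
  -- determinant of hσS
  have hP : (Matrix.of (fun i j => if i = τ j then (1 : ℂ) else 0)).det
      = ((Equiv.Perm.sign τ : ℤ) : ℂ) := by
    have hPe : Matrix.of (fun i j => if i = τ j then (1 : ℂ) else 0)
        = Matrix.transpose (Equiv.Perm.permMatrix ℂ τ) := by
      ext i j
      by_cases h : i = τ j <;>
        simp [Equiv.Perm.permMatrix, Matrix.transpose_apply, PEquiv.toMatrix_apply,
          Equiv.toPEquiv, Option.mem_def, h, Ne.symm]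
    rw [hPe, Matrix.det_transpose, Matrix.det_permutation]
  have hdeteq : σ S.det = (1 / (d : ℂ)) ^ n *
      (S.det * (∏ j, ε j) * ((Equiv.Perm.sign τ : ℤ) : ℂ)) := by
    have h := congrArg Matrix.det hσS
    have hmap : (S.map ⇑σ).det = σ S.det := by
      have := (RingHom.map_det (σ : ℂ →+* ℂ) S).symm
      simpa [RingHom.mapMatrix_apply] using this
    rw [hmap, Matrix.det_smul, Fintype.card_fin, Matrix.det_mul, Matrix.det_mul,
      Matrix.det_diagonal, hP] at h
    exact h
  -- conclude
  have hsign2 : ((Equiv.Perm.sign τ : ℤ) : ℂ) * ((Equiv.Perm.sign τ : ℤ) : ℂ) = 1 := by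
    rcases Int.units_eq_one_or (Equiv.Perm.sign τ) with h | h <;> simp [h]
  have hfin : (∏ j, ε j) * ((Equiv.Perm.sign τ : ℤ) : ℂ) = 1 := by
    have h' := hdeteq
    rw [hsdet] at h'
    field_simp at h'
    have h2 : S.det * ((∏ j, ε j) * ((Equiv.Perm.sign τ : ℤ) : ℂ)) = S.det * 1 := by
      have hdn : (d : ℂ) ^ n * (1 / (d : ℂ)) ^ n = 1 := by
        rw [← mul_pow, mul_one_div_cancel hd0, one_pow]
      rw [mul_one]; linear_combination (-S.det) * h' - (S.det * (∏ j, ε j) * ((Equiv.Perm.sign τ : ℤ) : ℂ)) * hdn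
    exact mul_left_cancel₀ hdetS h2
  calc ∏ j, ε j = (∏ j, ε j) * (((Equiv.Perm.sign τ : ℤ) : ℂ) * ((Equiv.Perm.sign τ : ℤ) : ℂ)) := by
        rw [hsign2, mul_one]
    _ = ((∏ j, ε j) * ((Equiv.Perm.sign τ : ℤ) : ℂ)) * ((Equiv.Perm.sign τ : ℤ) : ℂ) := by ring
    _ = ((Equiv.Perm.sign τ : ℤ) : ℂ) := by rw [hfin, one_mul]
end

section
/- Suppose S̃ is an n×n real matrix with orthogonal columns, each of squared length D², T = diag(θ_i) with |θ_i| = 1, and T·S̃·T·S̃·T = D₊·S̃ with |D₊| = D. Then for j ≠ k with s̃_{j,k} ≠ 0: D ≤ (1/|s̃_{j,k}|)·Σ_{i} |s̃_{i,j}·s̃_{i,k}|. -/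
theorem stmt6 (n : ℕ) (S : Matrix (Fin n) (Fin n) ℝ) (D : ℝ)
    (hcol : ∀ j, ∑ i, (S i j)^2 = D^2)
    (horth : ∀ j k, j ≠ k → ∑ i, S i j * S i k = 0)
    (θ : Fin n → ℂ) (hθ : ∀ i, ‖θ i‖ = 1)
    (Dp : ℂ) (hDp : ‖Dp‖ = D)
    (heq : Matrix.diagonal θ * S.map Complex.ofReal * Matrix.diagonal θ *
      S.map Complex.ofReal * Matrix.diagonal θ = Dp • S.map Complex.ofReal) :
    ∀ j k, j ≠ k → S j k ≠ 0 →
      D ≤ (1 / |S j k|) * ∑ i, |S i j * S i k| := by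
  intro j k hjk hSjk
  have habs : (0:ℝ) < |S j k| := abs_pos.mpr hSjk
  rcases le_or_gt D 0 with hD | hD
  · have h1 : (0:ℝ) ≤ (1 / |S j k|) * ∑ i, |S i j * S i k| := by
      apply mul_nonneg (by positivity)
      exact Finset.sum_nonneg fun i _ => abs_nonneg _
    linarith
  -- D > 0
  set M := S.map Complex.ofReal with hM
  have hθne : ∀ i, θ i ≠ 0 := by
    intro i h
    have := hθ i
    rw [h] at this
    simp at this
  have hT'T : Matrix.diagonal (fun i => (θ i)⁻¹) * Matrix.diagonal θ = 1 := by
    rw [Matrix.diagonal_mul_diagonal]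
    have : (fun i => (θ i)⁻¹ * θ i) = fun _ => (1:ℂ) :=
      funext fun i => inv_mul_cancel₀ (hθne i)
    rw [this, Matrix.diagonal_one]
  have hMtM : M.transpose * M = (D^2 : ℂ) • 1 := by
    ext a b
    simp only [Matrix.mul_apply, Matrix.transpose_apply, Matrix.smul_apply, Matrix.one_apply, hM,
      Matrix.map_apply]
    by_cases h : a = b
    · subst h
      simp only [if_pos rfl, smul_eq_mul, mul_one]
      rw [show ((D:ℂ)^2) = ((D^2 : ℝ) : ℂ) by push_cast; ring, ← hcol a]
      push_cast
      rw [mul_one]; exact Finset.sum_congr rfl fun i _ => (sq ((S i a : ℂ))).symm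
    · simp only [if_neg h, smul_eq_mul, mul_zero]
      have h2 := congrArg Complex.ofReal (horth a b h)
      push_cast at h2
      simpa using h2
  have key : Dp • (M.transpose * Matrix.diagonal (fun i => (θ i)⁻¹) * M)
      = (D^2 : ℂ) • (Matrix.diagonal θ * M * Matrix.diagonal θ) := by
    calc Dp • (M.transpose * Matrix.diagonal (fun i => (θ i)⁻¹) * M)
        = M.transpose * Matrix.diagonal (fun i => (θ i)⁻¹) * (Dp • M) := by
          rw [Matrix.mul_smul]
      _ = M.transpose * Matrix.diagonal (fun i => (θ i)⁻¹) *
          (Matrix.diagonal θ * M * Matrix.diagonal θ * M * Matrix.diagonal θ) := by rw [heq]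
      _ = (M.transpose * ((Matrix.diagonal fun i => (θ i)⁻¹) * Matrix.diagonal θ)) *
          (M * (Matrix.diagonal θ * M * Matrix.diagonal θ)) := by noncomm_ring
      _ = (M.transpose * M) * (Matrix.diagonal θ * M * Matrix.diagonal θ) := by
          rw [hT'T, Matrix.mul_one, ← Matrix.mul_assoc]
      _ = (D^2 : ℂ) • (Matrix.diagonal θ * M * Matrix.diagonal θ) := by
          rw [hMtM, Matrix.smul_mul, Matrix.one_mul]
  have lhs_eq : (M.transpose * Matrix.diagonal (fun i => (θ i)⁻¹) * M) j k
      = ∑ i, (S i j : ℂ) * (θ i)⁻¹ * (S i k : ℂ) := by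
    rw [Matrix.mul_assoc, Matrix.mul_apply]
    refine Finset.sum_congr rfl fun i _ => ?_
    simp only [Matrix.transpose_apply, Matrix.diagonal_mul, hM, Matrix.map_apply]
    ring
  have rhs_eq : (Matrix.diagonal θ * M * Matrix.diagonal θ) j k
      = θ j * (S j k : ℂ) * θ k := by
    simp [Matrix.mul_diagonal, Matrix.diagonal_mul, hM, Matrix.map_apply]
  have entry' : Dp * (∑ i, (S i j : ℂ) * (θ i)⁻¹ * (S i k : ℂ))
      = (D^2 : ℂ) * (θ j * (S j k : ℂ) * θ k) := by
    have h := congrFun (congrFun key j) k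
    simp only [Matrix.smul_apply, smul_eq_mul] at h
    rw [lhs_eq, rhs_eq] at h
    exact h
  have habs2 : D * (D * |S j k|) = D * ‖∑ i, (S i j : ℂ) * (θ i)⁻¹ * (S i k : ℂ)‖ := by
    have h := congrArg (fun z : ℂ => ‖z‖) entry'
    simp only [norm_mul] at h
    rw [hDp] at h
    rw [show ‖((D:ℂ)^2)‖ = D^2 by
        rw [norm_pow, Complex.norm_real, Real.norm_eq_abs, abs_of_pos hD]] at h
    rw [hθ, hθ, Complex.norm_real, Real.norm_eq_abs] at h
    nlinarith [h]
  have habs3 : D * |S j k| = ‖∑ i, (S i j : ℂ) * (θ i)⁻¹ * (S i k : ℂ)‖ :=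
    mul_left_cancel₀ (ne_of_gt hD) habs2
  have hbound : ‖∑ i, (S i j : ℂ) * (θ i)⁻¹ * (S i k : ℂ)‖ ≤ ∑ i, |S i j * S i k| := by
    refine le_trans (norm_sum_le _ _) (Finset.sum_le_sum fun i _ => ?_)
    rw [norm_mul, norm_mul, norm_inv, hθ, Complex.norm_real, Complex.norm_real, abs_mul]
    simp
  have hfin : D * |S j k| ≤ ∑ i, |S i j * S i k| := habs3 ▸ hbound
  rw [one_div, ← div_eq_inv_mul, le_div_iff₀ habs]
  linarith
end

section
/- Let α be a positive integer, d₂ = α + √(α²+2), and d₁ = d₂²/2. Then there do NOT exist θ₁, θ₂ on the unit circle with |1 + θ₂·d₂² + (1/4)·θ₁·d₂⁴| = 1 + d₂²/2. -/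
theorem stmt8 (α : ℕ) (hα : 1 ≤ α) :
    ¬ ∃ θ₁ θ₂ : ℂ, ‖θ₁‖ = 1 ∧ ‖θ₂‖ = 1 ∧
      ‖(1 + θ₂ * (((α : ℝ) + Real.sqrt ((α : ℝ)^2 + 2) : ℝ) : ℂ)^2 +
          (1/4 : ℂ) * θ₁ * (((α : ℝ) + Real.sqrt ((α : ℝ)^2 + 2) : ℝ) : ℂ)^4)‖
        = 1 + ((α : ℝ) + Real.sqrt ((α : ℝ)^2 + 2))^2 / 2 := by
  rintro ⟨θ₁, θ₂, h1, h2, h⟩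
  set s : ℝ := Real.sqrt ((α : ℝ)^2 + 2) with hs
  have hα1 : (1:ℝ) ≤ (α : ℝ) := by exact_mod_cast hα
  have hs2 : s^2 = (α : ℝ)^2 + 2 := Real.sq_sqrt (by positivity)
  have hs0 : 0 ≤ s := Real.sqrt_nonneg _
  have hs17 : (1.7:ℝ) ≤ s := by nlinarith
  set d : ℝ := (α : ℝ) + s with hd
  have hd27 : (2.7:ℝ) ≤ d := by rw [hd]; linarith
  have hd0 : 0 < d := by linarith
  have e1 : ‖(1/4 : ℂ) * θ₁ * ((d : ℝ) : ℂ)^4‖ = d^4/4 := by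
    rw [norm_mul, norm_mul, norm_pow, Complex.norm_real, Real.norm_eq_abs, abs_of_pos hd0, h1]
    norm_num
    ring
  have e2 : ‖1 + θ₂ * ((d : ℝ) : ℂ)^2‖ ≤ 1 + d^2 := by
    calc ‖1 + θ₂ * ((d : ℝ) : ℂ)^2‖
        ≤ ‖(1:ℂ)‖ + ‖θ₂ * ((d : ℝ) : ℂ)^2‖ :=
          norm_add_le _ _
      _ = 1 + d^2 := by
          rw [norm_one, norm_mul, norm_pow, Complex.norm_real, Real.norm_eq_abs, abs_of_pos hd0, h2, one_mul]
  have key : d^4/4 ≤ (1 + d^2/2) + (1 + d^2) := by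
    have heq : (1/4 : ℂ) * θ₁ * ((d : ℝ) : ℂ)^4 =
        (1 + θ₂ * ((d : ℝ) : ℂ)^2 + (1/4 : ℂ) * θ₁ * ((d : ℝ) : ℂ)^4)
          - (1 + θ₂ * ((d : ℝ) : ℂ)^2) := by ring
    have := norm_sub_le (1 + θ₂ * ((d : ℝ) : ℂ)^2 + (1/4 : ℂ) * θ₁ * ((d : ℝ) : ℂ)^4)
      (1 + θ₂ * ((d : ℝ) : ℂ)^2)
    rw [← heq, e1, h] at this
    exact this.trans (add_le_add_right e2 _)
  have hdsq : (7.29:ℝ) ≤ d^2 := by nlinarith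
  nlinarith [sq_nonneg (d^2 - 7.29)]
end

section
/- Let d₁ be the largest real root of p₁(x) = x³ - 2x² - x + 1 and set d₂ = d₁/(d₁-1). Then d₂ is a root of x³ - x² - 2x + 1, d₁ = 2cos(π/7)/(2cos(π/7)-1), d₂ = 2cos(π/7), and the matrix S̃ with rows (1, d₁, d₂), (d₁, -d₂, 1), (d₂, 1, -d₁) satisfies S̃² = (1 + d₁² + d₂²)·I. -/
private lemma aux1 (t : ℝ) (h1 : t - 1 ≠ 0) (h : t^3 - t^2 - 2*t + 1 = 0) :
    (t/(t-1))^3 - 2*(t/(t-1))^2 - (t/(t-1)) + 1 = 0 := by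
  field_simp
  linear_combination -h

private lemma aux1' (t : ℝ) (h1 : t - 1 ≠ 0) (h : t^3 - 2*t^2 - t + 1 = 0) :
    (t/(t-1))^3 - (t/(t-1))^2 - 2*(t/(t-1)) + 1 = 0 := by
  field_simp
  linear_combination -h

private lemma aux2 (t : ℝ) (h1 : t - 1 ≠ 0) : (t/(t-1))/((t/(t-1))-1) = t := by
  have h2 : t/(t-1) - 1 = 1/(t-1) := by field_simp; ring
  rw [h2]
  field_simp

private lemma auxM (a b : ℝ) (h : a + b - a * b = 0) :
    (!![1, a, b; a, -b, 1; b, 1, -a] : Matrix (Fin 3) (Fin 3) ℝ) *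
      !![1, a, b; a, -b, 1; b, 1, -a] = (1 + a^2 + b^2) • 1 := by
  ext i j
  fin_cases i <;> fin_cases j <;>
    simp [Matrix.mul_apply, Fin.sum_univ_succ, Matrix.one_apply] <;>
    first | ring1 | linear_combination h | linear_combination -h

theorem stmt9 (d₁ : ℝ)
    (hroot : d₁^3 - 2*d₁^2 - d₁ + 1 = 0)
    (hmax : ∀ x : ℝ, x^3 - 2*x^2 - x + 1 = 0 → x ≤ d₁) :
    let d₂ := d₁ / (d₁ - 1)
    d₂^3 - d₂^2 - 2*d₂ + 1 = 0 ∧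
    d₁ = 2 * Real.cos (Real.pi/7) / (2 * Real.cos (Real.pi/7) - 1) ∧
    d₂ = 2 * Real.cos (Real.pi/7) ∧
    (!![1, d₁, d₂; d₁, -d₂, 1; d₂, 1, -d₁] : Matrix (Fin 3) (Fin 3) ℝ) *
      !![1, d₁, d₂; d₁, -d₂, 1; d₂, 1, -d₁] = (1 + d₁^2 + d₂^2) • 1 := by
  intro d₂
  have hpi : (0:ℝ) < Real.pi := Real.pi_pos
  have hy_half : (1/2 : ℝ) < Real.cos (Real.pi/7) := by
    have : Real.cos (Real.pi/3) < Real.cos (Real.pi/7) := by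
      apply Real.cos_lt_cos_of_nonneg_of_le_pi
      · positivity
      · linarith
      · linarith
    simpa [Real.cos_pi_div_three] using this
  have hy_one : Real.cos (Real.pi/7) ≤ 1 := Real.cos_le_one _
  set y := Real.cos (Real.pi/7) with hy
  -- quartic equation for y from cos(4π/7) = -cos(3π/7)
  have h4 : Real.cos (4*(Real.pi/7)) = - Real.cos (3*(Real.pi/7)) := by
    rw [show (4:ℝ)*(Real.pi/7) = Real.pi - 3*(Real.pi/7) by ring, Real.cos_pi_sub]
  have h3 : Real.cos (3*(Real.pi/7)) = 4*y^3 - 3*y := by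
    rw [Real.cos_three_mul]
  have h2 : Real.cos (2*(Real.pi/7)) = 2*y^2 - 1 := by
    rw [Real.cos_two_mul]
  have h4' : Real.cos (4*(Real.pi/7)) = 2*(2*y^2-1)^2 - 1 := by
    rw [show (4:ℝ)*(Real.pi/7) = 2*(2*(Real.pi/7)) by ring, Real.cos_two_mul, h2]
  have hquart : 8*y^4 + 4*y^3 - 8*y^2 - 3*y + 1 = 0 := by
    have := h4
    rw [h4', h3] at this
    nlinarith [this]
  have hcubic : 8*y^3 - 4*y^2 - 4*y + 1 = 0 := by
    have hy1 : y + 1 > 0 := by linarith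
    have hfac : (y + 1) * (8*y^3 - 4*y^2 - 4*y + 1) = 0 := by
      linear_combination hquart
    rcases mul_eq_zero.mp hfac with h | h
    · linarith
    · exact h
  clear_value y
  clear h4 h3 h2 h4' hquart hy
  -- c := 2y satisfies the second cubic
  have hq : (2*y)^3 - (2*y)^2 - 2*(2*y) + 1 = 0 := by linear_combination hcubic
  have hcne : (2*y) - 1 ≠ 0 := by intro h; nlinarith
  set c : ℝ := 2*y with hc
  have hcgt : c > 1 := by rw [hc]; linarith
  have hcle : c ≤ 2 := by rw [hc]; linarith
  clear_value c
  clear hcubic hy_half hy_one hc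
  -- r := c/(c-1) is a root of p₁
  have hpr : (c/(c-1))^3 - 2*(c/(c-1))^2 - (c/(c-1)) + 1 = 0 := aux1 c hcne hq
  set r : ℝ := c/(c-1) with hr
  have hrle : r ≤ d₁ := hmax r hpr
  have hr2 : r ≥ 2 := by
    rw [hr, ge_iff_le, le_div_iff₀ (by linarith : (0:ℝ) < c - 1)]
    linarith
  have hd_eq : d₁ = r := by
    by_contra hne
    have hd_gt : d₁ > r := lt_of_le_of_ne hrle (fun h => hne h.symm)
    have key : (d₁ - r) * (d₁^2 + d₁*r + r^2 - 2*d₁ - 2*r - 1) = 0 := by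
      linear_combination hroot - hpr
    have hQ : d₁^2 + d₁*r + r^2 - 2*d₁ - 2*r - 1 > 0 := by nlinarith
    have hpos : d₁ - r > 0 := by linarith
    nlinarith [key]
  have hd2c : d₂ = c := by
    show d₁ / (d₁ - 1) = c
    rw [hd_eq, hr]
    exact aux2 c hcne
  have hd1 : d₁ - 1 ≠ 0 := by
    intro h
    have : d₁ = 1 := by linarith
    rw [this] at hroot; norm_num at hroot
  have hd2root : d₂^3 - d₂^2 - 2*d₂ + 1 = 0 := aux1' d₁ hd1 hroot
  refine ⟨hd2root, by rw [hd_eq, hr], by rw [hd2c], ?_⟩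
  have hkey : d₁ + d₂ - d₁ * d₂ = 0 := by
    show d₁ + d₁/(d₁-1) - d₁ * (d₁/(d₁-1)) = 0
    field_simp
    ring
  exact auxM d₁ d₂ hkey
end
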